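/- Let μ₁, μ₂, μ₃, η ∈ [−1, ∞) satisfy μ₁, μ₂, η ≥ 0, μ₃ ≤ 0, and c₁(μ₁² + 2μ₁) = c₂(μ₂² + 2μ₂) = c(η² + 2η) = −c₃(μ₃² + 2μ₃) for positive constants c₁, c₂, c₃ with c = c₁ + c₂ + c₃. Then ((1+μ₁)(1+μ₂) − (1+μ₃)(1+η))² ≥ (1/2)(μ₁² + μ₂² + μ₃²). -/
import Mathlib


private lemma aux_key (a b d η : ℝ) (ha : 0 ≤ a) (hb : η ≤ b) (hd : η ≤ d) (hη : 0 ≤ η) :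
    (1/2)*((a+η)^2 + b^2 + d^2) ≤ (a + b + d)^2 := by
  nlinarith [mul_nonneg ha (sub_nonneg.2 hb), mul_nonneg ha (hη.trans hb),
    mul_nonneg ha (hη.trans hd), mul_nonneg (sub_nonneg.2 hb) (hη.trans hd),
    mul_nonneg hη (sub_nonneg.2 hd), mul_nonneg hη hη,
    mul_nonneg (hη.trans hb) (hη.trans hd)]

theorem finite_dim_ineq_case1 (μ₁ μ₂ μ₃ η c₁ c₂ c₃ : ℝ)
    (hμ₁ : -1 ≤ μ₁) (hμ₂ : -1 ≤ μ₂) (hμ₃ : -1 ≤ μ₃) (hη : -1 ≤ η)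
    (h1 : 0 ≤ μ₁) (h2 : 0 ≤ μ₂) (h4 : 0 ≤ η) (h3 : μ₃ ≤ 0)
    (hc₁ : 0 < c₁) (hc₂ : 0 < c₂) (hc₃ : 0 < c₃)
    (e1 : c₁ * (μ₁ ^ 2 + 2 * μ₁) = c₂ * (μ₂ ^ 2 + 2 * μ₂))
    (e2 : c₂ * (μ₂ ^ 2 + 2 * μ₂) = (c₁ + c₂ + c₃) * (η ^ 2 + 2 * η))
    (e3 : (c₁ + c₂ + c₃) * (η ^ 2 + 2 * η) = -(c₃ * (μ₃ ^ 2 + 2 * μ₃))) :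
    ((1 + μ₁) * (1 + μ₂) - (1 + μ₃) * (1 + η)) ^ 2 ≥
      (1 / 2) * (μ₁ ^ 2 + μ₂ ^ 2 + μ₃ ^ 2) := by
  have hη0 : 0 ≤ η ^ 2 + 2 * η := by nlinarith
  have k1 : η ^ 2 + 2 * η ≤ μ₁ ^ 2 + 2 * μ₁ := by
    have : c₁ * (η ^ 2 + 2 * η) ≤ c₁ * (μ₁ ^ 2 + 2 * μ₁) := by
      nlinarith [mul_nonneg hc₂.le hη0, mul_nonneg hc₃.le hη0]
    exact le_of_mul_le_mul_left this hc₁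
  have k2 : η ^ 2 + 2 * η ≤ μ₂ ^ 2 + 2 * μ₂ := by
    have : c₂ * (η ^ 2 + 2 * η) ≤ c₂ * (μ₂ ^ 2 + 2 * μ₂) := by
      nlinarith [mul_nonneg hc₁.le hη0, mul_nonneg hc₃.le hη0]
    exact le_of_mul_le_mul_left this hc₂
  have hd : 0 ≤ -(μ₃ ^ 2 + 2 * μ₃) := by nlinarith
  have k3 : η ^ 2 + 2 * η ≤ -(μ₃ ^ 2 + 2 * μ₃) := by
    have : c₃ * (η ^ 2 + 2 * η) ≤ c₃ * (-(μ₃ ^ 2 + 2 * μ₃)) := by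
      nlinarith [mul_nonneg hc₁.le hη0, mul_nonneg hc₂.le hη0]
    exact le_of_mul_le_mul_left this hc₃
  have m1 : η ≤ μ₁ := by nlinarith
  have m2 : η ≤ μ₂ := by nlinarith
  have m3 : η ≤ -μ₃ := by nlinarith
  have a0 : 0 ≤ μ₁ - η := by linarith
  have d0 : 0 ≤ -μ₃ := by linarith
  have hs : (μ₁ - η) + μ₂ + (-μ₃) ≤ (1 + μ₁) * (1 + μ₂) - (1 + μ₃) * (1 + η) := by
    nlinarith [mul_nonneg h1 h2, mul_nonneg d0 h4]
  have hs0 : 0 ≤ (μ₁ - η) + μ₂ + (-μ₃) := by linarith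
  have hsq : ((μ₁ - η) + μ₂ + (-μ₃)) ^ 2 ≤ ((1 + μ₁) * (1 + μ₂) - (1 + μ₃) * (1 + η)) ^ 2 :=
    pow_le_pow_left₀ hs0 hs 2
  have key := aux_key (μ₁-η) μ₂ (-μ₃) η a0 m2 m3 h4
  have r1 : ((μ₁-η)+η)^2 = μ₁^2 := by ring
  have r2 : (-μ₃:ℝ)^2 = μ₃^2 := by ring
  rw [r1, r2] at key
  linarith [hsq, key]
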